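/- Let b₁,…,b_n be an LLL-reduced basis of a lattice in a real inner product space. Then for any lattice vector x = Σᵢ mᵢbᵢ (mᵢ ∈ ℤ) one has |mᵢ| ≤ 2^{(n−1)/2}·(3/2)^{n−i}·‖x‖/‖b₁‖ for i = 1,…,n. -/

import Mathlib

open Module
open scoped RealInnerProductSpace

/-- The Gram–Schmidt orthogonalization of a family of vectors indexed by `Fin n`. -/
noncomputable def gramSchmidtFin {n : ℕ} [NeZero n] {E : Type*}
    [NormedAddCommGroup E] [InnerProductSpace ℝ E] (b : Fin n → E) : Fin n → E :=
  @InnerProductSpace.gramSchmidt ℝ E _ _ _ (Fin n) _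
    (inferInstance : LocallyFiniteOrderBot (Fin n))
    (inferInstance : WellFoundedLT (Fin n)) b

section Aux
variable {n : ℕ} [NeZero n] {E : Type*} [NormedAddCommGroup E] [InnerProductSpace ℝ E]
  (b : Fin n → E)

lemma gsf_orth {a c : Fin n} (h : a ≠ c) : ⟪gramSchmidtFin b a, gramSchmidtFin b c⟫ = 0 :=
  @InnerProductSpace.gramSchmidt_orthogonal ℝ E _ _ _ (Fin n) _
    (inferInstance : LocallyFiniteOrderBot (Fin n))
    (inferInstance : WellFoundedLT (Fin n)) b a c h

lemma gsf_ne_zero (hb : LinearIndependent ℝ b) (k : Fin n) : gramSchmidtFin b k ≠ 0 :=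
  @InnerProductSpace.gramSchmidt_ne_zero ℝ E _ _ _ (Fin n) _
    (inferInstance : LocallyFiniteOrderBot (Fin n))
    (inferInstance : WellFoundedLT (Fin n)) b k hb

lemma gsf_inv_tri {i j : Fin n} (hij : i < j) : ⟪gramSchmidtFin b j, b i⟫ = 0 :=
  @InnerProductSpace.gramSchmidt_inv_triangular ℝ E _ _ _ (Fin n) _
    (inferInstance : LocallyFiniteOrderBot (Fin n))
    (inferInstance : WellFoundedLT (Fin n)) b i j hij

lemma gsf_def'' (k : Fin n) :
    b k = gramSchmidtFin b k + ∑ i ∈ Finset.Iio k,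
      ((⟪gramSchmidtFin b i, b k⟫ / (‖gramSchmidtFin b i‖ : ℝ) ^ 2) • gramSchmidtFin b i) :=
  @InnerProductSpace.gramSchmidt_def'' ℝ E _ _ _ (Fin n) _
    (inferInstance : LocallyFiniteOrderBot (Fin n))
    (inferInstance : WellFoundedLT (Fin n)) b k

lemma gsf_zero : gramSchmidtFin b 0 = b 0 := by
  have h := @InnerProductSpace.gramSchmidt_def ℝ E _ _ _ (Fin n) _
    (inferInstance : LocallyFiniteOrderBot (Fin n))
    (inferInstance : WellFoundedLT (Fin n)) b 0
  have he : Finset.Iio (0 : Fin n) = ∅ := by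
    ext j; simp [Finset.mem_Iio]
  rw [show gramSchmidtFin b 0 = _ from h, he]
  simp

lemma gsf_inner_self (k : Fin n) : ⟪b k, gramSchmidtFin b k⟫ = ‖gramSchmidtFin b k‖ ^ 2 := by
  set g := gramSchmidtFin b with hg
  conv_lhs => rw [gsf_def'' b k]
  rw [inner_add_left, sum_inner]
  rw [Finset.sum_eq_zero fun i hi => by
    rw [real_inner_smul_left, gsf_orth b (Finset.mem_Iio.mp hi).ne, mul_zero]]
  rw [add_zero, real_inner_self_eq_norm_sq]
end Aux

/-- Corollary 10.2. For an LLL-reduced basis `b₁,…,b_n` of a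
lattice in a real inner product space, every lattice vector `x = Σᵢ mᵢ bᵢ`
(`mᵢ ∈ ℤ`) satisfies `|mᵢ| ≤ 2^{(n−1)/2}·(3/2)^{n−i}·‖x‖/‖b₁‖` (indices are
zero-based here, so the exponent is `n−1−i` and `b₁` is `b 0`). -/
theorem lll_coefficient_bound' (n : ℕ) [NeZero n]
    (E : Type*) [NormedAddCommGroup E] [InnerProductSpace ℝ E]
    (b : Fin n → E) (hb : LinearIndependent ℝ b)
    (hsize : ∀ i j : Fin n, j < i →
      |⟪b i, gramSchmidtFin b j⟫ / ‖gramSchmidtFin b j‖ ^ 2| ≤ 1 / 2)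
    (hlovasz : ∀ i j : Fin n, (j : ℕ) + 1 = (i : ℕ) →
      ‖gramSchmidtFin b i +
          (⟪b i, gramSchmidtFin b j⟫ / ‖gramSchmidtFin b j‖ ^ 2) • gramSchmidtFin b j‖ ^ 2 ≥
        3 / 4 * ‖gramSchmidtFin b j‖ ^ 2) :
    ∀ (m : Fin n → ℤ) (i : Fin n),
      (|m i| : ℝ) ≤
        (2 : ℝ) ^ (((n : ℝ) - 1) / 2) * (3 / 2) ^ (n - 1 - (i : ℕ)) *
          ‖∑ j, (m j : ℝ) • b j‖ / ‖b 0‖ := by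
  intro m i
  set g := gramSchmidtFin b with hg
  set x := ∑ j, (m j : ℝ) • b j with hx
  set A : ℝ := (2 : ℝ) ^ (((n : ℝ) - 1) / 2) * ‖x‖ / ‖b 0‖ with hA
  have hgpos : ∀ k : Fin n, (0 : ℝ) < ‖g k‖ :=
    fun k => norm_pos_iff.mpr (gsf_ne_zero b hb k)
  have hgsq : ∀ k : Fin n, (0 : ℝ) < ‖g k‖ ^ 2 := fun k => pow_pos (hgpos k) 2
  have hb0pos : (0 : ℝ) < ‖b 0‖ := by rw [← gsf_zero b]; exact hgpos 0
  have hApos : 0 ≤ A := by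
    have hc : (0:ℝ) < (2 : ℝ) ^ (((n : ℝ) - 1) / 2) := Real.rpow_pos_of_pos (by norm_num) _
    rw [hA]
    positivity
  -- inner products of b j with g k
  have hlt : ∀ j k : Fin n, j < k → ⟪b j, g k⟫ = 0 := fun j k h => by
    rw [real_inner_comm]; exact gsf_inv_tri b h
  have hgt : ∀ j k : Fin n, k < j → |⟪b j, g k⟫| ≤ 1 / 2 * ‖g k‖ ^ 2 := fun j k h => by
    have h1 := hsize j k h
    rw [abs_div, abs_of_pos (hgsq k), div_le_iff₀ (hgsq k)] at h1
    linarith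
  -- the key exact identity
  have hsum : ∀ k : Fin n, (m k : ℝ) * ‖g k‖ ^ 2 =
      ⟪x, g k⟫ - ∑ j ∈ Finset.univ.filter (fun j => k < j), (m j : ℝ) * ⟪b j, g k⟫ := by
    intro k
    have hxk : ⟪x, g k⟫ = ∑ j, (m j : ℝ) * ⟪b j, g k⟫ := by
      rw [hx, sum_inner]
      exact Finset.sum_congr rfl fun j _ => real_inner_smul_left _ _ _
    rw [hxk, ← Finset.sum_filter_add_sum_filter_not Finset.univ (fun j => k < j)]
    have h2 : ∑ j ∈ Finset.univ.filter (fun j => ¬ k < j), (m j : ℝ) * ⟪b j, g k⟫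
        = (m k : ℝ) * ‖g k‖ ^ 2 := by
      rw [Finset.sum_eq_single_of_mem k (by simp)]
      · rw [gsf_inner_self b k]
      · intro j hj hjk
        simp only [Finset.mem_filter, Finset.mem_univ, true_and, not_lt] at hj
        rw [hlt j k (lt_of_le_of_ne hj hjk), mul_zero]
    rw [h2]; ring
  -- Size bounds ⟹ core inequality
  have core : ∀ k : Fin n, |(m k : ℝ)| ≤ ‖x‖ / ‖g k‖
      + 1 / 2 * ∑ j ∈ Finset.univ.filter (fun j => k < j), |(m j : ℝ)| := by
    intro k
    set S := ∑ j ∈ Finset.univ.filter (fun j => k < j), |(m j : ℝ)| with hS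
    have h2 : |(m k : ℝ)| * ‖g k‖ ^ 2 ≤ ‖x‖ * ‖g k‖ + S * (1 / 2 * ‖g k‖ ^ 2) := by
      have e1 : |(m k : ℝ)| * ‖g k‖ ^ 2 = |(m k : ℝ) * ‖g k‖ ^ 2| := by
        rw [abs_mul, abs_of_pos (hgsq k)]
      rw [e1, hsum k]
      have e2 : |⟪x, g k⟫ - ∑ j ∈ Finset.univ.filter (fun j => k < j), (m j : ℝ) * ⟪b j, g k⟫|
          ≤ |⟪x, g k⟫| + |∑ j ∈ Finset.univ.filter (fun j => k < j), (m j : ℝ) * ⟪b j, g k⟫| :=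
        abs_sub _ _
      have e3 : |⟪x, g k⟫| ≤ ‖x‖ * ‖g k‖ := abs_real_inner_le_norm x (g k)
      have e4 : |∑ j ∈ Finset.univ.filter (fun j => k < j), (m j : ℝ) * ⟪b j, g k⟫|
          ≤ S * (1 / 2 * ‖g k‖ ^ 2) := by
        refine (Finset.abs_sum_le_sum_abs _ _).trans ?_
        rw [hS, Finset.sum_mul]
        refine Finset.sum_le_sum fun j hj => ?_
        simp only [Finset.mem_filter, Finset.mem_univ, true_and] at hj
        rw [abs_mul]
        exact mul_le_mul_of_nonneg_left (hgt j k hj) (abs_nonneg _)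
      linarith
    have h3 : (‖x‖ / ‖g k‖ + 1 / 2 * S) * ‖g k‖ ^ 2
        = ‖x‖ * ‖g k‖ + S * (1 / 2 * ‖g k‖ ^ 2) := by
      have hne : ‖g k‖ ≠ 0 := (hgpos k).ne'
      field_simp
    exact le_of_mul_le_mul_right (h2.trans_eq h3.symm) (hgsq k)
  -- Lovász ⟹ norm lower bound
  have hstep : ∀ t (ht : t + 1 < n), ‖g ⟨t, by omega⟩‖ ^ 2 ≤ 2 * ‖g ⟨t + 1, ht⟩‖ ^ 2 := by
    intro t ht
    set i : Fin n := ⟨t + 1, ht⟩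
    set j : Fin n := ⟨t, by omega⟩
    have hij : j < i := by simp [i, j, Fin.lt_def]
    set μ : ℝ := ⟪b i, g j⟫ / ‖g j‖ ^ 2 with hμ
    have hl := hlovasz i j rfl
    have hexp : ‖g i + μ • g j‖ ^ 2 = ‖g i‖ ^ 2 + μ ^ 2 * ‖g j‖ ^ 2 := by
      rw [norm_add_sq_real, real_inner_smul_right, gsf_orth b hij.ne', mul_zero,
        norm_smul, mul_pow, Real.norm_eq_abs, sq_abs]
      ring
    have hμ2 : μ ^ 2 ≤ 1 / 4 := by
      have := hsize i j hij
      have h0 : |μ| ≤ 1 / 2 := this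
      nlinarith [abs_nonneg μ, sq_abs μ]
    rw [hexp] at hl
    nlinarith [hgsq j]
  have hnorm : ∀ k : Fin n, ‖b 0‖ ^ 2 ≤ 2 ^ (k : ℕ) * ‖g k‖ ^ 2 := by
    have key : ∀ t (ht : t < n), ‖b 0‖ ^ 2 ≤ 2 ^ t * ‖g ⟨t, ht⟩‖ ^ 2 := by
      intro t
      induction t with
      | zero => intro ht
                have h0 : (⟨0, ht⟩ : Fin n) = 0 := rfl
                rw [h0, hg, gsf_zero b]; norm_num
      | succ t ih =>
        intro ht
        have h1 := ih (by omega)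
        have h2 := hstep t ht
        have h3 : (2:ℝ) ^ t * ‖g ⟨t, by omega⟩‖ ^ 2 ≤ 2 ^ (t+1) * ‖g ⟨t+1, ht⟩‖ ^ 2 := by
          calc (2:ℝ) ^ t * ‖g ⟨t, by omega⟩‖ ^ 2
              ≤ 2 ^ t * (2 * ‖g ⟨t+1, ht⟩‖ ^ 2) :=
                mul_le_mul_of_nonneg_left h2 (by positivity)
            _ = 2 ^ (t+1) * ‖g ⟨t+1, ht⟩‖ ^ 2 := by ring
        linarith
    intro k
    have := key (k : ℕ) k.isLt
    simpa using this
  -- ⟹ ‖x‖/‖g k‖ ≤ A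
  have hAbound : ∀ k : Fin n, ‖x‖ / ‖g k‖ ≤ A := by
    intro k
    set c : ℝ := (2 : ℝ) ^ (((n : ℝ) - 1) / 2) with hc
    have hcpos : 0 < c := Real.rpow_pos_of_pos (by norm_num) _
    have hc2 : c ^ 2 = (2 : ℝ) ^ ((n : ℝ) - 1) := by
      rw [hc, ← Real.rpow_natCast ((2:ℝ) ^ (((n : ℝ) - 1) / 2)) 2,
        ← Real.rpow_mul (by norm_num)]
      norm_num
    have hkn : ((k : ℕ) : ℝ) ≤ (n : ℝ) - 1 := by
      have h1 : (k : ℕ) + 1 ≤ n := k.isLt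
      have := Nat.cast_le (α := ℝ) |>.mpr h1
      push_cast at this ⊢
      linarith
    have hpow : (2 : ℝ) ^ (k : ℕ) ≤ c ^ 2 := by
      rw [hc2, ← Real.rpow_natCast 2 (k : ℕ)]
      exact Real.rpow_le_rpow_of_exponent_le (by norm_num) hkn
    have hineq : ‖b 0‖ ^ 2 ≤ (c * ‖g k‖) ^ 2 := by
      have := hnorm k
      have h2 : (2:ℝ) ^ (k : ℕ) * ‖g k‖ ^ 2 ≤ c ^ 2 * ‖g k‖ ^ 2 :=
        mul_le_mul_of_nonneg_right hpow (le_of_lt (hgsq k))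
      calc ‖b 0‖ ^ 2 ≤ (2:ℝ) ^ (k : ℕ) * ‖g k‖ ^ 2 := this
        _ ≤ c ^ 2 * ‖g k‖ ^ 2 := h2
        _ = (c * ‖g k‖) ^ 2 := by ring
    have hb0le : ‖b 0‖ ≤ c * ‖g k‖ := by
      nlinarith [hb0pos, mul_pos hcpos (hgpos k)]
    rw [hA, div_le_div_iff₀ (hgpos k) hb0pos]
    have hxnn : (0:ℝ) ≤ ‖x‖ := norm_nonneg x
    calc ‖x‖ * ‖b 0‖ ≤ ‖x‖ * (c * ‖g k‖) := mul_le_mul_of_nonneg_left hb0le hxnn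
      _ = c * ‖x‖ * ‖g k‖ := by ring
  -- the tail sums
  set S : ℕ → ℝ := fun t => ∑ j ∈ Finset.univ.filter (fun j : Fin n => t ≤ (j : ℕ)), |(m j : ℝ)|
    with hSdef
  have hS0 : ∀ t, n ≤ t → S t = 0 := by
    intro t ht
    rw [hSdef]
    have : Finset.univ.filter (fun j : Fin n => t ≤ (j : ℕ)) = ∅ := by
      ext j; simp only [Finset.mem_filter, Finset.mem_univ, true_and, Finset.notMem_empty,
        iff_false]
      omega
    simp [this]
  have hSrec : ∀ t (ht : t < n), S t = |(m ⟨t, ht⟩ : ℝ)| + S (t + 1) := by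
    intro t ht
    have hins : Finset.univ.filter (fun j : Fin n => t ≤ (j : ℕ))
        = insert (⟨t, ht⟩ : Fin n) (Finset.univ.filter (fun j : Fin n => t + 1 ≤ (j : ℕ))) := by
      ext j
      simp only [Finset.mem_filter, Finset.mem_univ, true_and, Finset.mem_insert, Fin.ext_iff]
      omega
    rw [hSdef]
    simp only []
    rw [hins, Finset.sum_insert (by simp)]
  have hfilter : ∀ k : Fin n, Finset.univ.filter (fun j : Fin n => k < j)
      = Finset.univ.filter (fun j : Fin n => (k : ℕ) + 1 ≤ (j : ℕ)) := by
    intro k; ext j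
    simp only [Finset.mem_filter, Finset.mem_univ, true_and, Fin.lt_def]
    omega
  have core' : ∀ k : Fin n, |(m k : ℝ)| ≤ A + 1 / 2 * S ((k : ℕ) + 1) := by
    intro k
    have h1 := core k
    rw [hfilter k] at h1
    have h2 := hAbound k
    calc |(m k : ℝ)| ≤ ‖x‖ / ‖g k‖
          + 1 / 2 * ∑ j ∈ Finset.univ.filter (fun j : Fin n => (k : ℕ) + 1 ≤ (j : ℕ)),
            |(m j : ℝ)| := h1
      _ ≤ A + 1 / 2 * S ((k : ℕ) + 1) := by rw [hSdef]; exact add_le_add h2 le_rfl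
  -- downward induction on tails
  have claim : ∀ d t, n - t ≤ d → S t ≤ 2 * ((3 / 2 : ℝ) ^ (n - t) - 1) * A := by
    intro d
    induction d with
    | zero =>
      intro t ht
      have h1 : n ≤ t := by omega
      rw [hS0 t h1]
      have : n - t = 0 := by omega
      rw [this]; norm_num
    | succ d ih =>
      intro t ht
      by_cases hnt : n ≤ t
      · rw [hS0 t hnt]
        have : n - t = 0 := by omega
        rw [this]; norm_num
      · push_neg at hnt
        have ht' : t < n := hnt
        have hIH := ih (t + 1) (by omega)
        have hc := core' ⟨t, ht'⟩
        have hcc : |(m ⟨t, ht'⟩ : ℝ)| ≤ A + 1 / 2 * S (t + 1) := hc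
        have hrec := hSrec t ht'
        have hpowpos : (0:ℝ) ≤ (3 / 2 : ℝ) ^ (n - (t + 1)) := by positivity
        have hnt1 : n - t = (n - (t + 1)) + 1 := by omega
        rw [hrec, hnt1, pow_succ]
        set p : ℝ := (3 / 2 : ℝ) ^ (n - (t + 1))
        -- goal : |m ⟨t⟩| + S (t+1) ≤ 2 * (p * (3/2) - 1) * A
        nlinarith [hIH, hcc]
  -- conclusion
  have hfin : |(m i : ℝ)| ≤ (3 / 2 : ℝ) ^ (n - 1 - (i : ℕ)) * A := by
    have h1 := core' i
    have h2 := claim (n - ((i : ℕ) + 1)) ((i : ℕ) + 1) le_rfl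
    have he : n - ((i : ℕ) + 1) = n - 1 - (i : ℕ) := by omega
    rw [he] at h2
    nlinarith [hApos]
  have hcast : (|m i| : ℝ) = |(m i : ℝ)| := by push_cast; ring
  rw [hcast]
  refine hfin.trans_eq ?_
  rw [hA]; ring
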